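/- Assume 0 < σ < 1 and 2σ+1 < δ_u < 3. Then there exists a constant C, depending only on L, σ, δ_u and C_B, such that whenever Λ_u < ∞ one has (c ν)² · max(Λ_u − 1, 0)^{1+δ_u} ≤ C · Σ_{q≥−1} λ_q^{−1+δ_u} a_q². -/

import Mathlib

open scoped ENNReal

/-- The admissibility condition at level `q` in the definition of the abstract velocity
determining wavenumber (`λ_q = 2^q`): `(L λ_{p-q})^σ λ_q^{-1} a_p < c ν` for every
integer `p > q`, and `λ_q^{-2} G_q < c ν`. -/
def GoodU (L c ν σ : ℝ) (a G : ℤ → ℝ) (q : ℕ) : Prop :=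
  (∀ p : ℤ, (q : ℤ) < p →
      (L * (2:ℝ) ^ (p - (q : ℤ))) ^ σ * ((2:ℝ) ^ (q : ℤ))⁻¹ * a p < c * ν) ∧
    (((2:ℝ) ^ (q : ℤ)) ^ 2)⁻¹ * G q < c * ν

/-- The abstract velocity determining wavenumber `Λ_u = λ_Q = 2^Q`, where `Q` is the
least admissible natural number; `Λ_u = ∞` if no natural number is admissible. -/
noncomputable def LambdaU (L c ν σ : ℝ) (a G : ℤ → ℝ) : ℝ≥0∞ :=
  sInf {x : ℝ≥0∞ | ∃ q : ℕ, GoodU L c ν σ a G q ∧ x = 2 ^ q}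

lemma sum_Icc_eq_range (f : ℤ → ℝ) (Q : ℕ) :
    ∑ p ∈ Finset.Icc (-1 : ℤ) ((Q : ℤ) - 1), f p
      = ∑ n ∈ Finset.range (Q + 1), f ((n : ℤ) - 1) := by
  refine Finset.sum_nbij' (fun p => (p + 1).toNat) (fun n => (n : ℤ) - 1) ?_ ?_ ?_ ?_ ?_
  · intro p hp
    simp only [Finset.mem_Icc] at hp
    simp only [Finset.mem_range]
    omega
  · intro n hn
    simp only [Finset.mem_range] at hn
    simp only [Finset.mem_Icc]
    omega
  · intro p hp
    simp only [Finset.mem_Icc] at hp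
    show (((p + 1).toNat : ℤ)) - 1 = p
    omega
  · intro n hn
    show ((n : ℤ) - 1 + 1).toNat = n
    omega
  · intro p hp
    simp only [Finset.mem_Icc] at hp
    show f p = f (((p + 1).toNat : ℤ) - 1)
    congr 1
    omega

lemma lambdaU_exists {L c ν σ : ℝ} {a G : ℤ → ℝ}
    (h : LambdaU L c ν σ a G ≠ ⊤) : ∃ q : ℕ, GoodU L c ν σ a G q := by
  by_contra hno
  push_neg at hno
  apply h
  rw [LambdaU]
  rw [show {x : ℝ≥0∞ | ∃ q : ℕ, GoodU L c ν σ a G q ∧ x = 2 ^ q} = ∅ by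
    ext x
    simp only [Set.mem_setOf_eq, Set.mem_empty_iff_false, iff_false, not_exists]
    exact fun q hq => absurd hq.1 (hno q), sInf_empty]

open Classical in
lemma lambdaU_eq {L c ν σ : ℝ} {a G : ℤ → ℝ}
    (hex : ∃ q : ℕ, GoodU L c ν σ a G q) :
    LambdaU L c ν σ a G = 2 ^ Nat.find hex := by
  apply le_antisymm
  · exact sInf_le ⟨Nat.find hex, Nat.find_spec hex, rfl⟩
  · refine le_sInf ?_
    rintro x ⟨q, hq, rfl⟩
    exact pow_le_pow_right₀ one_le_two (Nat.find_min' hex hq)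

lemma rpow_two_mono {s t : ℝ} (h : s ≤ t) : (2:ℝ) ^ s ≤ (2:ℝ) ^ t :=
  Real.rpow_le_rpow_of_exponent_le one_le_two h

lemma case1_ineq (L σ δu c ν ap : ℝ) (m : ℕ) (p : ℤ)
    (hL : 1 ≤ L) (hδu1 : 2 * σ + 1 < δu)
    (hc : 0 < c) (hν : 0 < ν)
    (hp : (m : ℤ) < p)
    (hge : c * ν ≤ (L * (2:ℝ) ^ (p - (m : ℤ))) ^ σ * ((2:ℝ) ^ (m : ℤ))⁻¹ * ap) :
    (c * ν) ^ 2 * ((2:ℝ) ^ ((m + 1 : ℕ) : ℝ)) ^ (1 + δu) ≤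
      (L ^ σ) ^ 2 * (2:ℝ) ^ (2 + 2 * σ) * (((2:ℝ) ^ p) ^ (-1 + δu) * ap ^ 2) := by
  have h2 : (0:ℝ) < 2 := two_pos
  have hL0 : (0:ℝ) < L := lt_of_lt_of_le one_pos hL
  have e1 : (2:ℝ) ^ (p - (m : ℤ)) = (2:ℝ) ^ (((p : ℝ) - (m : ℝ)) : ℝ) := by
    rw [show ((p : ℝ) - (m : ℝ)) = (((p - (m : ℤ)) : ℤ) : ℝ) by push_cast; ring,
      Real.rpow_intCast]
  have e2 : ((2:ℝ) ^ (m : ℤ))⁻¹ = (2:ℝ) ^ (-(m : ℝ)) := by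
    rw [Real.rpow_neg h2.le, show ((m : ℝ)) = (((m : ℤ)) : ℝ) by push_cast; ring,
      Real.rpow_intCast]
  have hge' : c * ν ≤ L ^ σ * (2:ℝ) ^ (((p:ℝ) - m) * σ - m) * ap := by
    calc c * ν ≤ (L * (2:ℝ) ^ (p - (m : ℤ))) ^ σ * ((2:ℝ) ^ (m : ℤ))⁻¹ * ap := hge
    _ = L ^ σ * (2:ℝ) ^ (((p:ℝ) - m) * σ - m) * ap := by
        rw [e1, e2, Real.mul_rpow hL0.le (Real.rpow_nonneg h2.le _),
          ← Real.rpow_mul h2.le]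
        rw [show ((p:ℝ) - m) * σ - m = ((p:ℝ) - m) * σ + (-(m:ℝ)) by ring,
          Real.rpow_add h2]
        ring
  have hx : (m : ℝ) + 1 ≤ (p : ℝ) := by exact_mod_cast hp
  have esq : (c * ν) ^ 2 ≤ (L ^ σ) ^ 2 * (2:ℝ) ^ (2 * (((p:ℝ) - m) * σ - m)) * ap ^ 2 := by
    calc (c * ν) ^ 2 ≤ (L ^ σ * (2:ℝ) ^ (((p:ℝ) - m) * σ - m) * ap) ^ 2 :=
          pow_le_pow_left₀ (mul_nonneg hc.le hν.le) hge' 2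
    _ = (L ^ σ) ^ 2 * (2:ℝ) ^ (2 * (((p:ℝ) - m) * σ - m)) * ap ^ 2 := by
        rw [show (2:ℝ) ^ (2 * (((p:ℝ) - m) * σ - m))
            = ((2:ℝ) ^ ((((p:ℝ) - m) * σ - m))) ^ 2 by
          rw [two_mul, Real.rpow_add h2, sq]]
        ring
  have hexp : 2 * (((p:ℝ) - m) * σ - m) + ((m:ℝ) + 1) * (1 + δu)
      ≤ 2 + 2 * σ + (p:ℝ) * (-1 + δu) := by
    nlinarith [mul_nonneg (show (0:ℝ) ≤ (p:ℝ) - m - 1 by linarith)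
      (show (0:ℝ) ≤ δu - 2 * σ - 1 by linarith)]
  have elhs : ((2:ℝ) ^ ((m + 1 : ℕ) : ℝ)) ^ (1 + δu) = (2:ℝ) ^ (((m:ℝ) + 1) * (1 + δu)) := by
    rw [← Real.rpow_mul h2.le]; push_cast; ring_nf
  rw [elhs]
  calc (c * ν) ^ 2 * (2:ℝ) ^ (((m:ℝ) + 1) * (1 + δu))
      ≤ ((L ^ σ) ^ 2 * (2:ℝ) ^ (2 * (((p:ℝ) - m) * σ - m)) * ap ^ 2)
          * (2:ℝ) ^ (((m:ℝ) + 1) * (1 + δu)) :=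
        mul_le_mul_of_nonneg_right esq (Real.rpow_nonneg h2.le _)
    _ = (L ^ σ) ^ 2 * ap ^ 2
          * (2:ℝ) ^ (2 * (((p:ℝ) - m) * σ - m) + ((m:ℝ) + 1) * (1 + δu)) := by
        rw [Real.rpow_add h2]; ring
    _ ≤ (L ^ σ) ^ 2 * ap ^ 2 * (2:ℝ) ^ (2 + 2 * σ + (p:ℝ) * (-1 + δu)) := by
        refine mul_le_mul_of_nonneg_left (rpow_two_mono hexp) ?_
        positivity
    _ = (L ^ σ) ^ 2 * (2:ℝ) ^ (2 + 2 * σ) * (((2:ℝ) ^ p) ^ (-1 + δu) * ap ^ 2) := by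
        rw [show ((2:ℝ) ^ p) ^ (-1 + δu) = (2:ℝ) ^ ((p:ℝ) * (-1 + δu)) by
          rw [← Real.rpow_intCast 2 p, ← Real.rpow_mul h2.le],
          Real.rpow_add h2]
        ring

lemma case2_ineq (σ δu CB c ν : ℝ) (a : ℤ → ℝ) (m : ℕ) (g : ℝ)
    (hCB : 0 < CB) (hδu3 : δu < 3)
    (hc : 0 < c) (hν : 0 < ν)
    (ha : ∀ q : ℤ, -1 ≤ q → 0 ≤ a q)
    (hg1 : c * ν ≤ (((2:ℝ) ^ (m : ℤ)) ^ 2)⁻¹ * g)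
    (hg2 : g ≤ CB * ∑ n ∈ Finset.range (m + 2), (2:ℝ) ^ ((n : ℤ) - 1) * a ((n : ℤ) - 1)) :
    (c * ν) ^ 2 * ((2:ℝ) ^ ((m + 1 : ℕ) : ℝ)) ^ (1 + δu) ≤
      CB ^ 2 * (1 - (2:ℝ) ^ (δu - 3))⁻¹ * (2:ℝ) ^ (1 + δu) *
        ∑ n ∈ Finset.range (m + 2),
          ((2:ℝ) ^ ((n : ℤ) - 1)) ^ (-1 + δu) * a ((n : ℤ) - 1) ^ 2 := by
  have h2 : (0:ℝ) < 2 := two_pos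
  set s : ℝ := (2:ℝ) ^ (δu - 3) with hs_def
  have hs0 : 0 < s := Real.rpow_pos_of_pos h2 _
  have hs1 : s < 1 := Real.rpow_lt_one_of_one_lt_of_neg one_lt_two (by linarith)
  have hK0 : 0 < (1 - s)⁻¹ := inv_pos.2 (by linarith)
  have zpow_eq : ∀ k : ℤ, (2:ℝ) ^ k = (2:ℝ) ^ ((k : ℝ) : ℝ) := fun k =>
    (Real.rpow_intCast 2 k).symm
  set Sb := ∑ n ∈ Finset.range (m + 2), (2:ℝ) ^ ((n : ℤ) - 1) * a ((n : ℤ) - 1) with hSb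
  set Sg := ∑ n ∈ Finset.range (m + 2),
      ((2:ℝ) ^ ((n : ℤ) - 1)) ^ (-1 + δu) * a ((n : ℤ) - 1) ^ 2 with hSg
  set Sf := ∑ n ∈ Finset.range (m + 2), ((2:ℝ) ^ ((n : ℤ) - 1)) ^ (3 - δu) with hSf
  have hterm_nonneg : ∀ n : ℕ, 0 ≤ (2:ℝ) ^ ((n : ℤ) - 1) * a ((n : ℤ) - 1) :=
    fun n => mul_nonneg (le_of_lt (zpow_pos h2 _)) (ha _ (by omega))
  have hSb0 : 0 ≤ Sb := Finset.sum_nonneg fun n _ => hterm_nonneg n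
  have hSg0 : 0 ≤ Sg := Finset.sum_nonneg fun n _ => by positivity
  have hCS : Sb ^ 2 ≤ Sf * Sg := by
    have := Finset.sum_mul_sq_le_sq_mul_sq (Finset.range (m + 2))
      (fun n => ((2:ℝ) ^ ((n : ℤ) - 1)) ^ ((3 - δu) / 2))
      (fun n => ((2:ℝ) ^ ((n : ℤ) - 1)) ^ ((-1 + δu) / 2) * a ((n : ℤ) - 1))
    have e1 : ∀ n : ℕ, ((2:ℝ) ^ ((n : ℤ) - 1)) ^ ((3 - δu) / 2) *
        (((2:ℝ) ^ ((n : ℤ) - 1)) ^ ((-1 + δu) / 2) * a ((n : ℤ) - 1))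
        = (2:ℝ) ^ ((n : ℤ) - 1) * a ((n : ℤ) - 1) := by
      intro n
      have hx : (0:ℝ) < (2:ℝ) ^ ((n : ℤ) - 1) := zpow_pos h2 _
      rw [← mul_assoc, ← Real.rpow_add hx, show (3 - δu) / 2 + (-1 + δu) / 2 = 1 by ring,
        Real.rpow_one]
    have e2 : ∀ n : ℕ, (((2:ℝ) ^ ((n : ℤ) - 1)) ^ ((3 - δu) / 2)) ^ 2
        = ((2:ℝ) ^ ((n : ℤ) - 1)) ^ (3 - δu) := by
      intro n
      have hx : (0:ℝ) < (2:ℝ) ^ ((n : ℤ) - 1) := zpow_pos h2 _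
      rw [sq, ← Real.rpow_add hx]; norm_num
    have e3 : ∀ n : ℕ, (((2:ℝ) ^ ((n : ℤ) - 1)) ^ ((-1 + δu) / 2) * a ((n : ℤ) - 1)) ^ 2
        = ((2:ℝ) ^ ((n : ℤ) - 1)) ^ (-1 + δu) * a ((n : ℤ) - 1) ^ 2 := by
      intro n
      have hx : (0:ℝ) < (2:ℝ) ^ ((n : ℤ) - 1) := zpow_pos h2 _
      rw [mul_pow, sq (((2:ℝ) ^ ((n : ℤ) - 1)) ^ ((-1 + δu) / 2)), ← Real.rpow_add hx,
        show (-1 + δu) / 2 + (-1 + δu) / 2 = -1 + δu by ring]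
    calc Sb ^ 2 = (∑ n ∈ Finset.range (m + 2),
          ((2:ℝ) ^ ((n : ℤ) - 1)) ^ ((3 - δu) / 2) *
            (((2:ℝ) ^ ((n : ℤ) - 1)) ^ ((-1 + δu) / 2) * a ((n : ℤ) - 1))) ^ 2 := by
          rw [hSb]; congr 1; exact Finset.sum_congr rfl fun n _ => (e1 n).symm
      _ ≤ _ := this
      _ = Sf * Sg := by
          rw [hSf, hSg]; congr 1
          · exact Finset.sum_congr rfl fun n _ => e2 n
          · exact Finset.sum_congr rfl fun n _ => e3 n
  have hSf_le : Sf ≤ (2:ℝ) ^ ((m : ℝ) * (3 - δu)) * (1 - s)⁻¹ := by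
    have eterm : ∀ n ∈ Finset.range (m + 2),
        ((2:ℝ) ^ ((n : ℤ) - 1)) ^ (3 - δu)
          = (2:ℝ) ^ ((m : ℝ) * (3 - δu)) * s ^ (m + 1 - n) := by
      intro n hn
      simp only [Finset.mem_range] at hn
      have hx : ((m + 1 - n : ℕ) : ℝ) = (m : ℝ) + 1 - n := by
        push_cast [Nat.cast_sub (by omega : n ≤ m + 1)]; ring
      rw [zpow_eq, ← Real.rpow_mul h2.le, hs_def, ← Real.rpow_natCast ((2:ℝ) ^ (δu - 3)),
        ← Real.rpow_mul h2.le, ← Real.rpow_add h2, hx]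
      congr 1
      push_cast
      ring
    rw [hSf, Finset.sum_congr rfl eterm, ← Finset.mul_sum]
    refine mul_le_mul_of_nonneg_left ?_ (Real.rpow_nonneg h2.le _)
    have hre : ∑ n ∈ Finset.range (m + 2), s ^ (m + 1 - n)
        = ∑ j ∈ Finset.range (m + 2), s ^ j := by
      have h := Finset.sum_range_reflect (fun j => s ^ j) (m + 2)
      calc ∑ n ∈ Finset.range (m + 2), s ^ (m + 1 - n)
          = ∑ n ∈ Finset.range (m + 2), s ^ (m + 2 - 1 - n) :=
            Finset.sum_congr rfl (fun n hn => by congr 1)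
        _ = ∑ j ∈ Finset.range (m + 2), s ^ j := h
    rw [hre]
    calc ∑ j ∈ Finset.range (m + 2), s ^ j ≤ ∑' j : ℕ, s ^ j :=
          Summable.sum_le_tsum _ (fun j _ => pow_nonneg hs0.le j)
            (summable_geometric_of_lt_one hs0.le hs1)
      _ = (1 - s)⁻¹ := tsum_geometric_of_lt_one hs0.le hs1
  have hcν : c * ν ≤ (2:ℝ) ^ (-(2 * (m : ℝ))) * (CB * Sb) := by
    have e4 : (((2:ℝ) ^ (m : ℤ)) ^ 2)⁻¹ = (2:ℝ) ^ (-(2 * (m : ℝ))) := by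
      rw [zpow_eq, ← Real.rpow_natCast ((2:ℝ) ^ ((m : ℤ) : ℝ)), ← Real.rpow_mul h2.le,
        ← Real.rpow_neg h2.le]
      norm_num
      ring_nf
    calc c * ν ≤ (((2:ℝ) ^ (m : ℤ)) ^ 2)⁻¹ * g := hg1
      _ ≤ (((2:ℝ) ^ (m : ℤ)) ^ 2)⁻¹ * (CB * Sb) := by
          refine mul_le_mul_of_nonneg_left hg2 ?_
          positivity
      _ = (2:ℝ) ^ (-(2 * (m : ℝ))) * (CB * Sb) := by rw [e4]
  have hsq : (c * ν) ^ 2 ≤ (2:ℝ) ^ (-(4 * (m : ℝ))) * CB ^ 2 * (Sf * Sg) := by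
    calc (c * ν) ^ 2 ≤ ((2:ℝ) ^ (-(2 * (m : ℝ))) * (CB * Sb)) ^ 2 :=
          pow_le_pow_left₀ (mul_nonneg hc.le hν.le) hcν 2
      _ = (2:ℝ) ^ (-(4 * (m : ℝ))) * CB ^ 2 * Sb ^ 2 := by
          rw [show (2:ℝ) ^ (-(4 * (m : ℝ)))
              = ((2:ℝ) ^ (-(2 * (m : ℝ)))) ^ 2 by
            rw [sq, ← Real.rpow_add h2]; ring_nf]
          ring
      _ ≤ (2:ℝ) ^ (-(4 * (m : ℝ))) * CB ^ 2 * (Sf * Sg) := by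
          refine mul_le_mul_of_nonneg_left hCS ?_
          positivity
  have elhs : ((2:ℝ) ^ ((m + 1 : ℕ) : ℝ)) ^ (1 + δu)
      = (2:ℝ) ^ (((m : ℝ) + 1) * (1 + δu)) := by
    rw [← Real.rpow_mul h2.le]; push_cast; ring_nf
  rw [elhs]
  calc (c * ν) ^ 2 * (2:ℝ) ^ (((m : ℝ) + 1) * (1 + δu))
      ≤ ((2:ℝ) ^ (-(4 * (m : ℝ))) * CB ^ 2 * (Sf * Sg)) * (2:ℝ) ^ (((m : ℝ) + 1) * (1 + δu)) :=
        mul_le_mul_of_nonneg_right hsq (Real.rpow_nonneg h2.le _)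
    _ ≤ ((2:ℝ) ^ (-(4 * (m : ℝ))) * CB ^ 2 *
          (((2:ℝ) ^ ((m : ℝ) * (3 - δu)) * (1 - s)⁻¹) * Sg)) *
          (2:ℝ) ^ (((m : ℝ) + 1) * (1 + δu)) := by
        refine mul_le_mul_of_nonneg_right ?_ (Real.rpow_nonneg h2.le _)
        refine mul_le_mul_of_nonneg_left ?_ (by positivity)
        exact mul_le_mul_of_nonneg_right hSf_le hSg0
    _ = CB ^ 2 * (1 - s)⁻¹ *
          ((2:ℝ) ^ (-(4 * (m : ℝ))) * (2:ℝ) ^ ((m : ℝ) * (3 - δu)) *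
            (2:ℝ) ^ (((m : ℝ) + 1) * (1 + δu))) * Sg := by ring
    _ = CB ^ 2 * (1 - s)⁻¹ * (2:ℝ) ^ (1 + δu) * Sg := by
        rw [← Real.rpow_add h2, ← Real.rpow_add h2,
          show -(4 * (m : ℝ)) + (m : ℝ) * (3 - δu) + ((m : ℝ) + 1) * (1 + δu) = 1 + δu by ring]

/-- pointwise bound on the velocity determining wavenumber. Assume
`0 < σ < 1` and `2σ+1 < δ_u < 3`. There is a constant `C` depending only on
`L, σ, δ_u, C_B` such that whenever `Λ_u < ∞`,
`(cν)² max(Λ_u - 1, 0)^{1+δ_u} ≤ C Σ_{q ≥ -1} λ_q^{-1+δ_u} a_q²`. -/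
theorem pointwise_velocity_wavenumber_bound
    (L σ δu CB : ℝ) (hL : 1 ≤ L) (hCB : 0 < CB)
    (hσ0 : 0 < σ) (hσ1 : σ < 1) (hδu1 : 2 * σ + 1 < δu) (hδu3 : δu < 3) :
    ∃ C : ℝ, 0 < C ∧
      ∀ (c ν : ℝ) (a G : ℤ → ℝ), 0 < c → 0 < ν →
        (∀ q : ℤ, -1 ≤ q → 0 ≤ a q) →
        (∀ q : ℤ, -1 ≤ q → 0 ≤ G q) →
        (∀ q : ℤ, -1 ≤ q →
          G q ≤ CB * ∑ p ∈ Finset.Icc (-1 : ℤ) q, (2:ℝ) ^ p * a p) →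
        LambdaU L c ν σ a G ≠ ⊤ →
        ENNReal.ofReal
            ((c * ν) ^ 2 * max ((LambdaU L c ν σ a G).toReal - 1) 0 ^ (1 + δu)) ≤
          ENNReal.ofReal C *
            ∑' n : ℕ,
              ENNReal.ofReal
                (((2:ℝ) ^ ((n : ℤ) - 1)) ^ (-1 + δu) * a ((n : ℤ) - 1) ^ 2) := by
  classical
  have h2 : (0:ℝ) < 2 := two_pos
  set s : ℝ := (2:ℝ) ^ (δu - 3) with hs_def
  have hs0 : 0 < s := Real.rpow_pos_of_pos h2 _
  have hs1 : s < 1 := Real.rpow_lt_one_of_one_lt_of_neg one_lt_two (by linarith)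
  set C1 : ℝ := (L ^ σ) ^ 2 * (2:ℝ) ^ (2 + 2 * σ) with hC1
  set C2 : ℝ := CB ^ 2 * (1 - s)⁻¹ * (2:ℝ) ^ (1 + δu) with hC2
  have hL0 : (0:ℝ) < L := lt_of_lt_of_le one_pos hL
  have hC1pos : 0 < C1 := by
    have := Real.rpow_pos_of_pos hL0 σ
    have := Real.rpow_pos_of_pos h2 (2 + 2 * σ)
    positivity
  have hC2pos : 0 < C2 := by
    have h1s : 0 < (1 - s)⁻¹ := inv_pos.2 (by linarith)
    have := Real.rpow_pos_of_pos h2 (1 + δu)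
    positivity
  refine ⟨C1 + C2, by linarith, ?_⟩
  intro c ν a G hc hν ha hG hGB hne
  have hex := lambdaU_exists hne
  set Q := Nat.find hex with hQdef
  have hΛ : LambdaU L c ν σ a G = 2 ^ Q := lambdaU_eq hex
  have htr : (LambdaU L c ν σ a G).toReal = (2:ℝ) ^ Q := by
    rw [hΛ]
    simp [ENNReal.toReal_pow]
  set T := ∑' n : ℕ,
      ENNReal.ofReal (((2:ℝ) ^ ((n : ℤ) - 1)) ^ (-1 + δu) * a ((n : ℤ) - 1) ^ 2) with hT
  rcases Nat.eq_zero_or_pos Q with hQ0 | hQpos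
  · rw [htr, hQ0]
    norm_num
    rw [Real.zero_rpow (by intro h; linarith [hδu1, hσ0] : (1:ℝ) + δu ≠ 0)]
    simp
  · obtain ⟨m, hm⟩ : ∃ m, Q = m + 1 := ⟨Q - 1, by omega⟩
    have hnot : ¬ GoodU L c ν σ a G m := Nat.find_min hex (by omega)
    -- bound the max factor
    have hmax : max ((2:ℝ) ^ Q - 1) 0 ^ (1 + δu) ≤ ((2:ℝ) ^ ((Q : ℕ) : ℝ)) ^ (1 + δu) := by
      refine Real.rpow_le_rpow (le_max_right _ _) ?_ (by linarith)
      rw [Real.rpow_natCast]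
      refine max_le ?_ (by positivity)
      linarith [pow_pos h2 Q]
    have hmain : ∀ B : ℝ, 0 ≤ B →
        (c * ν) ^ 2 * ((2:ℝ) ^ ((Q : ℕ) : ℝ)) ^ (1 + δu) ≤ B →
        ENNReal.ofReal ((c * ν) ^ 2 * max ((2:ℝ) ^ Q - 1) 0 ^ (1 + δu)) ≤
          ENNReal.ofReal B := by
      intro B hB0 hB
      refine ENNReal.ofReal_le_ofReal ?_
      calc (c * ν) ^ 2 * max ((2:ℝ) ^ Q - 1) 0 ^ (1 + δu)
          ≤ (c * ν) ^ 2 * ((2:ℝ) ^ ((Q : ℕ) : ℝ)) ^ (1 + δu) :=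
            mul_le_mul_of_nonneg_left hmax (by positivity)
        _ ≤ B := hB
    rw [GoodU, not_and_or] at hnot
    rw [htr]
    rcases hnot with h1 | hsec
    · push_neg at h1
      obtain ⟨p, hple, hge⟩ := h1
      have key := case1_ineq L σ δu c ν (a p) m p hL hδu1 hc hν hple hge
      rw [← hm] at key
      have hp1 : (-1 : ℤ) ≤ p := by omega
      have hap := ha p hp1
      set tp : ℝ := ((2:ℝ) ^ p) ^ (-1 + δu) * a p ^ 2 with htp
      have htp0 : 0 ≤ tp := by positivity
      have step1 : ENNReal.ofReal ((c * ν) ^ 2 * max ((2:ℝ) ^ Q - 1) 0 ^ (1 + δu)) ≤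
          ENNReal.ofReal (C1 * tp) :=
        hmain _ (by positivity) key
      refine le_trans step1 ?_
      have step2 : ENNReal.ofReal (C1 * tp) ≤ ENNReal.ofReal ((C1 + C2) * tp) :=
        ENNReal.ofReal_le_ofReal
          (mul_le_mul_of_nonneg_right (by linarith) htp0)
      refine le_trans step2 ?_
      rw [ENNReal.ofReal_mul (by linarith : (0:ℝ) ≤ C1 + C2)]
      refine mul_le_mul_right ?_ _
      have hidx : (((p + 1).toNat : ℤ)) - 1 = p := by omega
      have : ENNReal.ofReal tp =
          ENNReal.ofReal (((2:ℝ) ^ ((((p + 1).toNat : ℕ) : ℤ) - 1)) ^ (-1 + δu) *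
            a ((((p + 1).toNat : ℕ) : ℤ) - 1) ^ 2) := by
        rw [hidx]
      rw [this, hT]
      exact ENNReal.le_tsum _
    · push_neg at hsec
      have hGm := hGB (m : ℤ) (by omega)
      have hsum : ∑ p ∈ Finset.Icc (-1 : ℤ) (m : ℤ), (2:ℝ) ^ p * a p
          = ∑ n ∈ Finset.range (m + 2), (2:ℝ) ^ ((n : ℤ) - 1) * a ((n : ℤ) - 1) := by
        have := sum_Icc_eq_range (fun p => (2:ℝ) ^ p * a p) (m + 1)
        rw [show (((m + 1 : ℕ)) : ℤ) - 1 = (m : ℤ) by push_cast; ring] at this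
        rw [this]
      rw [hsum] at hGm
      have key := case2_ineq σ δu CB c ν a m (G (m : ℤ)) hCB hδu3 hc hν ha hsec hGm
      rw [← hm] at key
      set Sg := ∑ n ∈ Finset.range (m + 2),
          ((2:ℝ) ^ ((n : ℤ) - 1)) ^ (-1 + δu) * a ((n : ℤ) - 1) ^ 2 with hSgdef
      have hSg0 : 0 ≤ Sg := Finset.sum_nonneg fun n _ => by positivity
      have step1 : ENNReal.ofReal ((c * ν) ^ 2 * max ((2:ℝ) ^ Q - 1) 0 ^ (1 + δu)) ≤
          ENNReal.ofReal (C2 * Sg) :=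
        hmain _ (by positivity) key
      refine le_trans step1 ?_
      have step2 : ENNReal.ofReal (C2 * Sg) ≤ ENNReal.ofReal ((C1 + C2) * Sg) :=
        ENNReal.ofReal_le_ofReal
          (mul_le_mul_of_nonneg_right (by linarith) hSg0)
      refine le_trans step2 ?_
      rw [ENNReal.ofReal_mul (by linarith : (0:ℝ) ≤ C1 + C2)]
      refine mul_le_mul_right ?_ _
      rw [hSgdef, ENNReal.ofReal_sum_of_nonneg (fun n _ => by positivity), hT]
      exact ENNReal.sum_le_tsum _
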